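/- Let X be a set and T an overlap-free subset of ⟨X⟩\{1}. Then an element u of ⟨X : i(T)⟩ has a right inverse if and only if u lies in the submonoid of ⟨X : i(T)⟩ generated by the elements i(w) for w ∈ T together with the images of all nonempty initial substrings (prefixes, not necessarily proper) of elements of T. Dually, u has a left inverse if and only if u lies in the submonoid generated by the elements i(w) for w ∈ T together with the images of all nonempty final substrings (suffixes) of elements of T. -/

import Mathlib

namespace AdjoinInverses

variable {X : Type*}

/-- The embedding of the free monoid on `X` into the free monoid on `X ⊕ S`. -/
def emb (S : Set (FreeMonoid X)) : FreeMonoid X →* FreeMonoid (X ⊕ S) :=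
  FreeMonoid.map Sum.inl

/-- The generator `i(w)` corresponding to `w ∈ S`. -/
def igen (S : Set (FreeMonoid X)) (w : S) : FreeMonoid (X ⊕ S) :=
  FreeMonoid.of (Sum.inr w)

/-- The defining relations `w ⬝ i(w) = 1` and `i(w) ⬝ w = 1` for `w ∈ S`. -/
inductive InvRel (S : Set (FreeMonoid X)) : FreeMonoid (X ⊕ S) → FreeMonoid (X ⊕ S) → Prop
  | mul_inv (w : S) : InvRel S (emb S w.1 * igen S w) 1
  | inv_mul (w : S) : InvRel S (igen S w * emb S w.1) 1

/-- The congruence generated by the defining relations. -/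
def invCon (S : Set (FreeMonoid X)) : Con (FreeMonoid (X ⊕ S)) := conGen (InvRel S)

/-- The monoid `⟨X : i(S)⟩` obtained from the free monoid on `X` by universally
adjoining a two-sided inverse to each element of `S`. -/
def AdjInv (S : Set (FreeMonoid X)) : Type _ := (invCon S).Quotient

instance (S : Set (FreeMonoid X)) : Monoid (AdjInv S) := Con.monoid _

/-- The natural homomorphism `⟨X⟩ → ⟨X : i(S)⟩`. -/
def natHom (S : Set (FreeMonoid X)) : FreeMonoid X →* AdjInv S :=
  ((invCon S).mk').comp (emb S)

/-- The adjoined inverse `i(w)`, as an element of `⟨X : i(S)⟩`. -/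
def invElt (S : Set (FreeMonoid X)) (w : S) : AdjInv S :=
  (invCon S).mk' (igen S w)

/-- `S` and `S'` are inverse-equivalent: each element of `S'` becomes invertible in
`⟨X : i(S)⟩` and each element of `S` becomes invertible in `⟨X : i(S')⟩`. -/
def InvEquiv (S S' : Set (FreeMonoid X)) : Prop :=
  (∀ w ∈ S', IsUnit (natHom S w)) ∧ ∀ w ∈ S, IsUnit (natHom S' w)

/-- Two (nonidentity) elements of the free monoid overlap: one can be written `a*b`
and the other `b*c` with `b ≠ 1` and at most one of `a`, `c` equal to `1`. -/
def Overlap (u v : FreeMonoid X) : Prop :=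
  ∃ a b c : FreeMonoid X, b ≠ 1 ∧ (a ≠ 1 ∨ c ≠ 1) ∧ u = a * b ∧ v = b * c

/-- A set `T` is overlap-free if no pair of elements of `T` (distinct or not) overlap. -/
def OverlapFree (T : Set (FreeMonoid X)) : Prop :=
  ∀ u ∈ T, ∀ v ∈ T, ¬ Overlap u v

/-! ### Auxiliary development for Statement 5 -/

section Stmt5Aux

open List Relation

/-- The image of a word of `⟨X⟩` as a list of letters of `X ⊕ T`. -/
def eList (T : Set (FreeMonoid X)) (p : FreeMonoid X) : List (X ⊕ T) :=
  (FreeMonoid.toList p).map Sum.inl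

variable {T : Set (FreeMonoid X)}

lemma toList_eq_nil {p : FreeMonoid X} : FreeMonoid.toList p = [] ↔ p = 1 :=
  ⟨fun h => FreeMonoid.toList.injective (by simp [h]), fun h => by simp [h]⟩

lemma eList_eq_nil {p : FreeMonoid X} : eList T p = [] ↔ p = 1 := by
  rw [eList, List.map_eq_nil_iff, toList_eq_nil]

lemma inr_not_mem_eList {w : T} {p : FreeMonoid X} : (Sum.inr w : X ⊕ T) ∉ eList T p := by
  simp [eList]

lemma eList_inj {p q : FreeMonoid X} (h : eList T p = eList T q) : p = q := by
  rw [eList, eList] at h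
  exact FreeMonoid.toList.injective (List.map_injective_iff.2 Sum.inl_injective h)

lemma eList_eq_append {x : FreeMonoid X} {s t : List (X ⊕ T)} (h : eList T x = s ++ t) :
    ∃ p q : FreeMonoid X, x = p * q ∧ s = eList T p ∧ t = eList T q := by
  rcases List.map_eq_append_iff.1 h with ⟨l₁, l₂, hl, hh1, hh2⟩
  refine ⟨FreeMonoid.ofList l₁, FreeMonoid.ofList l₂, ?_, ?_, ?_⟩
  · exact FreeMonoid.toList.injective (by simpa using hl)
  · rw [eList]; simp [hh1]
  · rw [eList]; simp [hh2]

lemma exists_concat {α : Type*} {l : List α} (h : l ≠ []) : ∃ l' x, l = l' ++ [x] := by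
  rcases List.eq_nil_or_concat l with rfl | ⟨l', x, hx⟩
  · exact absurd rfl h
  · exact ⟨l', x, by simpa using hx⟩

/-- A redex: the word `w · i(w)` or `i(w) · w` (as a list of letters). -/
def IsRedex (T : Set (FreeMonoid X)) (r : List (X ⊕ T)) : Prop :=
  ∃ w : T, r = eList T w.1 ++ [Sum.inr w] ∨ r = [Sum.inr w] ++ eList T w.1

/-- One-step reduction: deletion of a redex. -/
def Red (T : Set (FreeMonoid X)) (x y : List (X ⊕ T)) : Prop :=
  ∃ a r b, IsRedex T r ∧ x = a ++ r ++ b ∧ y = a ++ b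

lemma isRedex_ne_nil {r : List (X ⊕ T)} (h : IsRedex T r) : r ≠ [] := by
  rcases h with ⟨w, rfl | rfl⟩ <;> simp

lemma split_of_le {α : Type*} {a b c d : List α} (h : a ++ b = c ++ d)
    (hl : a.length ≤ c.length) : ∃ m, c = a ++ m ∧ b = m ++ d := by
  rcases List.append_eq_append_iff.1 h with ⟨m, hm1, hm2⟩ | ⟨m, hm1, hm2⟩
  · exact ⟨m, hm1, hm2⟩
  · subst hm1
    have hm : m = [] := by
      rw [List.length_append] at hl
      exact List.eq_nil_of_length_eq_zero (by omega)
    subst hm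
    exact ⟨[], by simp, by simp [hm2]⟩

variable (h1 : (1 : FreeMonoid X) ∉ T) (hT : OverlapFree T)
include h1

lemma eList_ne_nil (w : T) : eList T w.1 ≠ [] := by
  rw [Ne, eList_eq_nil]
  exact fun h => h1 (h ▸ w.2)

/-- Containment of one redex in another forces them to coincide. -/
lemma contain {r₁ r₂ m t : List (X ⊕ T)}
    (hr₁ : IsRedex T r₁) (hr₂ : IsRedex T r₂) (h : r₁ = m ++ r₂ ++ t) :
    m = [] ∧ t = [] := by
  rcases hr₁ with ⟨w, hw | hw⟩ <;> rcases hr₂ with ⟨w', hw' | hw'⟩ <;> subst hw hw'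
  · -- E w ++ [j w] = m ++ (E w' ++ [j w']) ++ t
    rcases List.eq_nil_or_concat t with rfl | ⟨t', x, ht'⟩
    · refine ⟨?_, rfl⟩
      rw [List.append_nil] at h
      have h' : eList T w.1 ++ [Sum.inr w] = (m ++ eList T w'.1) ++ [Sum.inr w'] := by
        rw [h]; simp [List.append_assoc]
      obtain ⟨h2, h3⟩ := List.append_inj' h' rfl
      have hww : w = w' := by simpa using h3
      rw [← hww] at h2
      have hl := congrArg List.length h2
      rw [List.length_append] at hl
      exact List.eq_nil_of_length_eq_zero (by omega)
    · rw [List.concat_eq_append] at ht'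
      subst ht'
      have h' : eList T w.1 ++ [Sum.inr w] =
          (m ++ eList T w'.1 ++ [Sum.inr w'] ++ t') ++ [x] := by
        rw [h]; simp [List.append_assoc]
      obtain ⟨h2, _⟩ := List.append_inj' h' rfl
      exact absurd (show (Sum.inr w' : X ⊕ T) ∈ eList T w.1 by rw [h2]; simp)
        inr_not_mem_eList
  · -- E w ++ [j w] = m ++ ([j w'] ++ E w') ++ t
    obtain ⟨u, x, hu⟩ := exists_concat (show eList T w'.1 ++ t ≠ [] by
      intro hh; exact eList_ne_nil h1 w' (List.append_eq_nil_iff.1 hh).1)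
    have h' : eList T w.1 ++ [Sum.inr w] = (m ++ [Sum.inr w'] ++ u) ++ [x] := by
      rw [h]; simp only [List.append_assoc]; rw [hu]
    obtain ⟨h2, _⟩ := List.append_inj' h' rfl
    exact absurd (show (Sum.inr w' : X ⊕ T) ∈ eList T w.1 by rw [h2]; simp)
      inr_not_mem_eList
  · -- [j w] ++ E w = m ++ (E w' ++ [j w']) ++ t
    rcases m with _ | ⟨x, m'⟩
    · rcases hE : eList T w'.1 with _ | ⟨y, ys⟩
      · exact absurd hE (eList_ne_nil h1 w')
      · rw [hE] at h
        simp only [List.nil_append, List.cons_append, List.singleton_append,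
          List.cons.injEq] at h
        exact absurd (show (Sum.inr w : X ⊕ T) ∈ eList T w'.1 by
          rw [hE, h.1]; exact List.mem_cons_self) inr_not_mem_eList
    · simp only [List.nil_append, List.cons_append, List.singleton_append, List.cons.injEq] at h
      exact absurd (show (Sum.inr w' : X ⊕ T) ∈ eList T w.1 by rw [h.2]; simp)
        inr_not_mem_eList
  · -- [j w] ++ E w = m ++ ([j w'] ++ E w') ++ t
    rcases m with _ | ⟨x, m'⟩
    · simp only [List.nil_append, List.cons_append, List.singleton_append,
        List.cons.injEq] at h
      have hww : w = w' := by simpa using h.1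
      refine ⟨rfl, ?_⟩
      have h3 := h.2
      rw [← hww] at h3
      have hl := congrArg List.length h3
      rw [List.length_append] at hl
      exact (List.eq_nil_of_length_eq_zero (by omega))
    · simp only [List.nil_append, List.cons_append, List.singleton_append, List.cons.injEq] at h
      exact absurd (show (Sum.inr w' : X ⊕ T) ∈ eList T w.1 by rw [h.2]; simp)
        inr_not_mem_eList

include hT

lemma no_overlap {w w' : T} {p q c : FreeMonoid X}
    (hw : w.1 = p * q) (hw' : w'.1 = q * c) (hq : q ≠ 1) (h : p ≠ 1 ∨ c ≠ 1) : False :=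
  hT w.1 w.2 w'.1 w'.2 ⟨p, q, c, hq, h, hw, hw'⟩

/-- Genuinely overlapping redexes: this forces the critical-pair shape and the
two results agree. -/
lemma overlap_core {r₁ r₂ m s t : List (X ⊕ T)}
    (hr₁ : IsRedex T r₁) (hr₂ : IsRedex T r₂)
    (e1 : r₁ = m ++ s) (e2 : r₂ = s ++ t) (hs : s ≠ []) (ht : t ≠ []) : m = t := by
  rcases hr₁ with ⟨w, hw | hw⟩ <;> rcases hr₂ with ⟨w', hw' | hw'⟩ <;> subst hw hw'
  · obtain ⟨s', x, rfl⟩ := exists_concat hs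
    have e1' : eList T w.1 ++ [Sum.inr w] = (m ++ s') ++ [x] := by
      rw [e1]; simp [List.append_assoc]
    obtain ⟨hEw, hx⟩ := List.append_inj' e1' rfl
    obtain rfl : x = Sum.inr w := by simpa using hx.symm
    obtain ⟨t', y, rfl⟩ := exists_concat ht
    have e2' : eList T w'.1 ++ [Sum.inr w'] = (s' ++ [Sum.inr w] ++ t') ++ [y] := by
      rw [e2]; simp [List.append_assoc]
    obtain ⟨hEw', _⟩ := List.append_inj' e2' rfl
    exact absurd (show (Sum.inr w : X ⊕ T) ∈ eList T w'.1 by rw [hEw']; simp)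
      inr_not_mem_eList
  · obtain ⟨s', x, rfl⟩ := exists_concat hs
    have e1' : eList T w.1 ++ [Sum.inr w] = (m ++ s') ++ [x] := by
      rw [e1]; simp [List.append_assoc]
    obtain ⟨hEw, hx⟩ := List.append_inj' e1' rfl
    obtain rfl : x = Sum.inr w := by simpa using hx.symm
    rcases s' with _ | ⟨y, s''⟩
    · -- s = [j w]; r₂ = [j w'] ++ E w' = [j w] ++ t
      simp only [List.nil_append, List.singleton_append, List.cons_append,
        List.cons.injEq] at e2
      obtain rfl : w' = w := by simpa using e2.1
      rw [List.append_nil] at hEw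
      rw [← hEw, ← e2.2]
    · -- j w' = y which lies in E w
      simp only [List.nil_append, List.cons_append, List.singleton_append, List.append_assoc,
        List.cons.injEq] at e2
      exact absurd (show (Sum.inr w' : X ⊕ T) ∈ eList T w.1 by
        rw [hEw, e2.1]; simp) inr_not_mem_eList
  · rcases m with _ | ⟨x, m'⟩
    · -- s = [j w] ++ E w, prefix of E w' ++ [j w']
      rw [List.nil_append] at e1
      subst e1
      rcases hE : eList T w'.1 with _ | ⟨y, ys⟩
      · exact absurd hE (eList_ne_nil h1 w')
      · rw [hE] at e2
        simp only [List.cons_append, List.singleton_append, List.cons.injEq] at e2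
        exact absurd (show (Sum.inr w : X ⊕ T) ∈ eList T w'.1 by
          rw [hE, e2.1]; exact List.mem_cons_self) inr_not_mem_eList
    · simp only [List.nil_append, List.cons_append, List.singleton_append, List.cons.injEq] at e1
      obtain ⟨rfl, hEw⟩ := e1
      obtain ⟨p, q, hpq, hm', hsE⟩ := eList_eq_append hEw
      obtain ⟨t', y, rfl⟩ := exists_concat ht
      have e2' : eList T w'.1 ++ [Sum.inr w'] = (s ++ t') ++ [y] := by
        rw [e2]; simp [List.append_assoc]
      obtain ⟨hEw', hy⟩ := List.append_inj' e2' rfl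
      obtain rfl : y = Sum.inr w' := by simpa using hy.symm
      obtain ⟨p', q', hpq', hsE', ht'E⟩ := eList_eq_append hEw'
      obtain rfl : q = p' := eList_inj (hsE.symm.trans hsE')
      have hq : q ≠ 1 := fun hq1 => hs (by rw [hsE, hq1, eList_eq_nil.2 rfl])
      by_cases hp : p = 1
      · by_cases hc : q' = 1
        · obtain rfl : w = w' := Subtype.ext (by
            rw [hpq, hpq', hp, hc, one_mul, mul_one])
          obtain rfl : m' = ([] : List (X ⊕ T)) := by rw [hm', hp, eList_eq_nil.2 rfl]
          obtain rfl : t' = ([] : List (X ⊕ T)) := by rw [ht'E, hc, eList_eq_nil.2 rfl]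
          rfl
        · exact absurd (no_overlap h1 hT hpq hpq' hq (Or.inr hc)) id
      · exact absurd (no_overlap h1 hT hpq hpq' hq (Or.inl hp)) id
  · rcases m with _ | ⟨x, m'⟩
    · rw [List.nil_append] at e1
      subst e1
      simp only [List.nil_append, List.singleton_append, List.cons_append, List.cons.injEq] at e2
      have hww : w' = w := by simpa using e2.1
      have h3 := e2.2
      rw [hww] at h3
      have hl := congrArg List.length h3
      rw [List.length_append] at hl
      exact absurd (List.eq_nil_of_length_eq_zero (by omega)) ht
    · simp only [List.nil_append, List.cons_append, List.singleton_append, List.cons.injEq] at e1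
      obtain ⟨rfl, hEw⟩ := e1
      rcases s with _ | ⟨z, s''⟩
      · exact absurd rfl hs
      · simp only [List.nil_append, List.singleton_append, List.cons_append, List.cons.injEq] at e2
        exact absurd (show (Sum.inr w' : X ⊕ T) ∈ eList T w.1 by
          rw [hEw, ← e2.1]; simp) inr_not_mem_eList

lemma diamond_aux {a₁ r₁ b₁ a₂ r₂ b₂ : List (X ⊕ T)}
    (hr₁ : IsRedex T r₁) (hr₂ : IsRedex T r₂)
    (heq : a₁ ++ r₁ ++ b₁ = a₂ ++ r₂ ++ b₂) (hle : a₁.length ≤ a₂.length) :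
    a₁ ++ b₁ = a₂ ++ b₂ ∨ ∃ d, Red T (a₁ ++ b₁) d ∧ Red T (a₂ ++ b₂) d := by
  obtain ⟨m, rfl, h2⟩ := split_of_le
    (show a₁ ++ (r₁ ++ b₁) = a₂ ++ (r₂ ++ b₂) by simpa [List.append_assoc] using heq) hle
  by_cases hlen : r₁.length ≤ m.length
  · obtain ⟨m', rfl, h3⟩ := split_of_le h2 hlen
    right
    refine ⟨a₁ ++ m' ++ b₂, ⟨a₁ ++ m', r₂, b₂, hr₂, ?_, rfl⟩, ⟨a₁, r₁, m' ++ b₂, hr₁, ?_, ?_⟩⟩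
    · rw [h3]; simp [List.append_assoc]
    · simp [List.append_assoc]
    · simp [List.append_assoc]
  · push_neg at hlen
    obtain ⟨s, hr₁s, h3⟩ := split_of_le h2.symm (le_of_lt hlen)
    have hs : s ≠ [] := by
      intro hnil
      rw [hr₁s, hnil, List.append_nil] at hlen
      exact lt_irrefl _ hlen
    by_cases hlen2 : r₂.length ≤ s.length
    · obtain ⟨t, hst, h4⟩ := split_of_le h3 hlen2
      obtain ⟨hm, htn⟩ := contain h1 hr₁ hr₂
        (show r₁ = m ++ r₂ ++ t by rw [hr₁s, hst]; simp [List.append_assoc])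
      left
      rw [h4, hm, htn]
      simp
    · push_neg at hlen2
      obtain ⟨t, hr₂s, h4⟩ := split_of_le h3.symm (le_of_lt hlen2)
      have ht : t ≠ [] := by
        intro hnil
        rw [hr₂s, hnil, List.append_nil] at hlen2
        exact lt_irrefl _ hlen2
      have hmt := overlap_core h1 hT hr₁ hr₂ hr₁s hr₂s hs ht
      left
      rw [h4, hmt]
      simp [List.append_assoc]

lemma diamond {x y z : List (X ⊕ T)} (hy : Red T x y) (hz : Red T x z) :
    y = z ∨ ∃ d, Red T y d ∧ Red T z d := by
  obtain ⟨a₁, r₁, b₁, hr₁, rfl, rfl⟩ := hy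
  obtain ⟨a₂, r₂, b₂, hr₂, heq, rfl⟩ := hz
  rcases le_total a₁.length a₂.length with hl | hl
  · exact diamond_aux h1 hT hr₁ hr₂ heq hl
  · rcases diamond_aux h1 hT hr₂ hr₁ heq.symm hl with h' | ⟨d, hd1, hd2⟩
    · exact Or.inl h'.symm
    · exact Or.inr ⟨d, hd2, hd1⟩

lemma cr_equiv : Equivalence (Join (ReflTransGen (Red T))) :=
  Relation.equivalence_join_reflTransGen fun a b c hab hac => by
    rcases diamond h1 hT hab hac with rfl | ⟨d, hd1, hd2⟩
    · exact ⟨b, ReflGen.refl, ReflTransGen.refl⟩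
    · exact ⟨d, ReflGen.single hd1, ReflTransGen.single hd2⟩

omit h1 hT

lemma red_append_left (c : List (X ⊕ T)) {x y : List (X ⊕ T)} (h : Red T x y) :
    Red T (c ++ x) (c ++ y) := by
  obtain ⟨a, r, b, hr, rfl, rfl⟩ := h
  exact ⟨c ++ a, r, b, hr, by simp [List.append_assoc], by simp [List.append_assoc]⟩

lemma red_append_right (c : List (X ⊕ T)) {x y : List (X ⊕ T)} (h : Red T x y) :
    Red T (x ++ c) (y ++ c) := by
  obtain ⟨a, r, b, hr, rfl, rfl⟩ := h
  exact ⟨a, r, b ++ c, hr, by simp [List.append_assoc], by simp [List.append_assoc]⟩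

lemma rtg_append {x y x' y' : List (X ⊕ T)} (h : ReflTransGen (Red T) x y)
    (h' : ReflTransGen (Red T) x' y') : ReflTransGen (Red T) (x ++ x') (y ++ y') := by
  have s1 : ReflTransGen (Red T) (x ++ x') (y ++ x') :=
    ReflTransGen.lift (· ++ x') (fun a b hab => red_append_right x' hab) _ _ h
  have s2 : ReflTransGen (Red T) (y ++ x') (y ++ y') :=
    ReflTransGen.lift (y ++ ·) (fun a b hab => red_append_left y hab) _ _ h'
  exact s1.trans s2

lemma red_not_nil {y : List (X ⊕ T)} (h : Red T [] y) : False := by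
  obtain ⟨a, r, b, hr, hx, _⟩ := h
  have := (List.append_eq_nil_iff.1 (List.append_eq_nil_iff.1 hx.symm).1).2
  exact isRedex_ne_nil hr this

lemma rtg_nil {z : List (X ⊕ T)} (h : ReflTransGen (Red T) [] z) : z = [] := by
  rcases h.cases_head with rfl | ⟨c, hc, _⟩
  · rfl
  · exact absurd hc red_not_nil

include h1 hT

/-- The congruence given by joinability of reductions. -/
def jCon : Con (FreeMonoid (X ⊕ T)) where
  r x y := Join (ReflTransGen (Red T)) (FreeMonoid.toList x) (FreeMonoid.toList y)
  iseqv := by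
    refine ⟨fun x => (cr_equiv h1 hT).refl _, fun h => (cr_equiv h1 hT).symm h,
      fun h h' => (cr_equiv h1 hT).trans h h'⟩
  mul' := by
    rintro w x y z ⟨c, hc1, hc2⟩ ⟨c', hc1', hc2'⟩
    exact ⟨c ++ c', rtg_append hc1 hc1', rtg_append hc2 hc2'⟩

lemma invCon_le : invCon T ≤ jCon h1 hT := by
  rw [invCon]
  apply Con.conGen_le.2
  rintro x y (⟨w⟩ | ⟨w⟩)
  · refine ⟨[], ReflTransGen.single ?_, ReflTransGen.refl⟩
    refine ⟨[], eList T w.1 ++ [Sum.inr w], [], ⟨w, Or.inl rfl⟩, ?_, rfl⟩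
    show FreeMonoid.toList (emb T w.1 * igen T w) = _
    simp [emb, igen, eList, FreeMonoid.toList_map]
  · refine ⟨[], ReflTransGen.single ?_, ReflTransGen.refl⟩
    refine ⟨[], [Sum.inr w] ++ eList T w.1, [], ⟨w, Or.inr rfl⟩, ?_, rfl⟩
    show FreeMonoid.toList (igen T w * emb T w.1) = _
    simp [emb, igen, eList, FreeMonoid.toList_map]

omit h1 hT

/-- The class of a letter-list in the quotient monoid. -/
def mkL (T : Set (FreeMonoid X)) (l : List (X ⊕ T)) : AdjInv T :=
  (invCon T).mk' (FreeMonoid.ofList l)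

lemma mkL_append (l l' : List (X ⊕ T)) : mkL T (l ++ l') = mkL T l * mkL T l' := by
  rw [mkL, mkL, mkL, FreeMonoid.ofList_append, map_mul]
  exact rfl

lemma ofList_eList (p : FreeMonoid X) : FreeMonoid.ofList (eList T p) = emb T p :=
  FreeMonoid.toList.injective (by simp [eList, emb, FreeMonoid.toList_map])

lemma mkL_eList (p : FreeMonoid X) : mkL T (eList T p) = natHom T p :=
  congrArg (invCon T).mk' (ofList_eList p)

lemma mkL_inr (w : T) : mkL T [Sum.inr w] = invElt T w := rfl

lemma mkL_redex {r : List (X ⊕ T)} (h : IsRedex T r) : mkL T r = 1 := by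
  rcases h with ⟨w, rfl | rfl⟩
  · rw [mkL_append, mkL_eList, mkL_inr]
    have hcon : invCon T (emb T w.1 * igen T w) 1 := ConGen.Rel.of _ _ (InvRel.mul_inv w)
    have hm : natHom T w.1 * invElt T w = (invCon T).mk' (emb T w.1 * igen T w) := by
      rw [map_mul]; rfl
    rw [hm]
    exact ((Con.eq (invCon T)).2 hcon).trans rfl
  · rw [mkL_append, mkL_eList, mkL_inr]
    have hcon : invCon T (igen T w * emb T w.1) 1 := ConGen.Rel.of _ _ (InvRel.inv_mul w)
    have hm : invElt T w * natHom T w.1 = (invCon T).mk' (igen T w * emb T w.1) := by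
      rw [map_mul]; rfl
    rw [hm]
    exact ((Con.eq (invCon T)).2 hcon).trans rfl

lemma mkL_red {x y : List (X ⊕ T)} (h : Red T x y) : mkL T x = mkL T y := by
  obtain ⟨a, r, b, hr, rfl, rfl⟩ := h
  rw [mkL_append, mkL_append, mkL_append, mkL_redex hr, mul_one]

/-- The right-invertible submonoid (generated by inverses and prefixes). -/
def Rp (T : Set (FreeMonoid X)) : Submonoid (AdjInv T) :=
  Submonoid.closure
    (Set.range (invElt T) ∪
      {x | ∃ w ∈ T, ∃ p q : FreeMonoid X, p ≠ 1 ∧ w = p * q ∧ x = natHom T p})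

/-- The left-invertible submonoid (generated by inverses and suffixes). -/
def Rs (T : Set (FreeMonoid X)) : Submonoid (AdjInv T) :=
  Submonoid.closure
    (Set.range (invElt T) ∪
      {x | ∃ w ∈ T, ∃ p q : FreeMonoid X, q ≠ 1 ∧ w = p * q ∧ x = natHom T q})

lemma invElt_mem_Rp (w : T) : invElt T w ∈ Rp T :=
  Submonoid.subset_closure (Or.inl ⟨w, rfl⟩)

lemma invElt_mem_Rs (w : T) : invElt T w ∈ Rs T :=
  Submonoid.subset_closure (Or.inl ⟨w, rfl⟩)

lemma prefix_mem_Rp {w : T} {p q : FreeMonoid X} (h : w.1 = p * q) :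
    mkL T (eList T p) ∈ Rp T := by
  by_cases hp : p = 1
  · rw [hp, eList_eq_nil.2 rfl]
    exact one_mem _
  · rw [mkL_eList]
    exact Submonoid.subset_closure (Or.inr ⟨w.1, w.2, p, q, hp, h, rfl⟩)

lemma suffix_mem_Rs {w : T} {p q : FreeMonoid X} (h : w.1 = p * q) :
    mkL T (eList T q) ∈ Rs T := by
  by_cases hq : q = 1
  · rw [hq, eList_eq_nil.2 rfl]
    exact one_mem _
  · rw [mkL_eList]
    exact Submonoid.subset_closure (Or.inr ⟨w.1, w.2, p, q, hq, h, rfl⟩)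

include h1

lemma redex_split {r r₁ r₂ : List (X ⊕ T)} (hr : IsRedex T r) (h : r = r₁ ++ r₂) :
    mkL T r₁ ∈ Rp T ∧ mkL T r₂ ∈ Rs T := by
  rcases hr with ⟨w, hw | hw⟩ <;> subst hw
  · rcases List.append_eq_append_iff.1 h.symm with ⟨a', ha1, ha2⟩ | ⟨c', hc1, hc2⟩
    · -- eList w = r₁ ++ a', r₂ = a' ++ [j w]
      obtain ⟨p, q, hpq, hr₁, ha'⟩ := eList_eq_append ha1
      subst hr₁ ha' ha2
      refine ⟨prefix_mem_Rp hpq, ?_⟩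
      rw [mkL_append, mkL_inr]
      exact mul_mem (suffix_mem_Rs hpq) (invElt_mem_Rs w)
    · -- r₁ = eList w ++ c', [j w] = c' ++ r₂
      rcases c' with _ | ⟨x, c''⟩
      · rw [List.append_nil] at hc1
        rw [List.nil_append] at hc2
        subst hc1
        subst hc2
        exact ⟨prefix_mem_Rp (mul_one (w.1)).symm, invElt_mem_Rs w⟩
      · rw [List.cons_append] at hc2
        injection hc2 with hx hc3
        obtain ⟨rfl, rfl⟩ := List.append_eq_nil_iff.1 hc3.symm
        subst hx
        subst hc1
        refine ⟨?_, one_mem _⟩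
        rw [mkL_redex ⟨w, Or.inl rfl⟩]
        exact one_mem _
  · rcases r₁ with _ | ⟨x, r₁'⟩
    · rw [List.nil_append] at h
      subst h
      refine ⟨one_mem _, ?_⟩
      rw [mkL_redex ⟨w, Or.inr rfl⟩]
      exact one_mem _
    · rw [List.singleton_append, List.cons_append] at h
      injection h with hx hEw
      subst hx
      obtain ⟨p, q, hpq, hr₁', hr₂⟩ := eList_eq_append hEw
      subst hr₁' hr₂
      constructor
      · rw [show (Sum.inr w :: eList T p : List (X ⊕ T)) = [Sum.inr w] ++ eList T p from rfl,
          mkL_append, mkL_inr]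
        exact mul_mem (invElt_mem_Rp w) (prefix_mem_Rp hpq)
      · exact suffix_mem_Rs hpq

/-- Main combinatorial lemma: if `u ++ v` reduces to the empty word then `u`
represents an element of `Rp` and `v` an element of `Rs`. -/
lemma main_lemma : ∀ {x : List (X ⊕ T)}, ReflTransGen (Red T) x [] →
    ∀ u v : List (X ⊕ T), x = u ++ v → mkL T u ∈ Rp T ∧ mkL T v ∈ Rs T := by
  intro x hx
  induction hx using Relation.ReflTransGen.head_induction_on with
  | refl =>
    rintro u v huv
    obtain ⟨rfl, rfl⟩ := List.append_eq_nil_iff.1 huv.symm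
    exact ⟨one_mem _, one_mem _⟩
  | head hstep hrest ih =>
    rintro u v rfl
    obtain ⟨a, r, b, hr, heq, rfl⟩ := hstep
    rcases List.append_eq_append_iff.1
      (show u ++ v = a ++ (r ++ b) by simpa [List.append_assoc] using heq)
      with ⟨m, hm1, hm2⟩ | ⟨m, hm1, hm2⟩
    · -- a = u ++ m, v = m ++ (r ++ b) : redex inside v
      subst hm1 hm2
      obtain ⟨hu, hmb⟩ := ih u (m ++ b) (by simp [List.append_assoc])
      refine ⟨hu, ?_⟩
      have hv : mkL T (m ++ (r ++ b)) = mkL T (m ++ b) := by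
        rw [mkL_append, mkL_append, mkL_append, mkL_redex hr, one_mul]
      rw [hv]
      exact hmb
    · -- u = a ++ m, r ++ b = m ++ v
      rcases List.append_eq_append_iff.1 hm2 with ⟨k, hk1, hk2⟩ | ⟨k, hk1, hk2⟩
      · -- m = r ++ k, b = k ++ v : redex inside u
        subst hk1 hk2 hm1
        obtain ⟨hak, hv⟩ := ih (a ++ k) v (by simp [List.append_assoc])
        refine ⟨?_, hv⟩
        have hu : mkL T (a ++ (r ++ k)) = mkL T (a ++ k) := by
          rw [mkL_append, mkL_append, mkL_append, mkL_redex hr, one_mul]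
        rw [hu]
        exact hak
      · -- r = m ++ k, v = k ++ b : redex straddles the boundary
        subst hk2 hm1
        obtain ⟨ha, hb⟩ := ih a b rfl
        obtain ⟨hmp, hks⟩ := redex_split h1 hr hk1
        exact ⟨by rw [mkL_append]; exact mul_mem ha hmp,
          by rw [mkL_append]; exact mul_mem hks hb⟩

include hT

/-- Key step: products equal to `1` in the quotient. -/
lemma key {u v : AdjInv T} (h : u * v = 1) : u ∈ Rp T ∧ v ∈ Rs T := by
  obtain ⟨x, rfl⟩ := Con.mk'_surjective (c := invCon T) u
  obtain ⟨y, rfl⟩ := Con.mk'_surjective (c := invCon T) v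
  have hcon : invCon T (x * y) 1 := by
    rw [← Con.eq (invCon T)]
    show (invCon T).mk' (x * y) = (invCon T).mk' 1
    rw [map_mul, map_one]
    exact h
  have hj := invCon_le h1 hT hcon
  obtain ⟨z, hz1, hz2⟩ := hj
  have hz : z = [] := rtg_nil hz2
  subst hz
  exact main_lemma h1
    (show ReflTransGen (Red T) (FreeMonoid.toList x ++ FreeMonoid.toList y) [] from hz1)
    (FreeMonoid.toList x) (FreeMonoid.toList y) rfl

omit h1 hT

lemma mk'_rel {a b : FreeMonoid (X ⊕ T)} (h : InvRel T a b) :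
    (invCon T).mk' a = (invCon T).mk' b :=
  (Con.eq (invCon T)).2 (ConGen.Rel.of _ _ h)

lemma Rp_right_inv {u : AdjInv T} (hu : u ∈ Rp T) : ∃ v, u * v = 1 := by
  induction hu using Submonoid.closure_induction with
  | mem x hx =>
    rcases hx with ⟨w, rfl⟩ | ⟨w, hw, p, q, hp, rfl, rfl⟩
    · refine ⟨natHom T w.1, ?_⟩
      rw [invElt, natHom]
      show (invCon T).mk' (igen T w) * (invCon T).mk' (emb T w.1) = 1
      rw [← map_mul, mk'_rel (InvRel.inv_mul w), map_one]
    · refine ⟨natHom T q * invElt T ⟨p * q, hw⟩, ?_⟩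
      rw [natHom, invElt]
      show (invCon T).mk' (emb T p) *
        ((invCon T).mk' (emb T q) * (invCon T).mk' (igen T ⟨p * q, hw⟩)) = 1
      have hemb : emb T p * emb T q = emb T (⟨p * q, hw⟩ : T).1 := by rw [← map_mul]
      rw [← map_mul, ← map_mul, ← mul_assoc, hemb,
        mk'_rel (InvRel.mul_inv ⟨p * q, hw⟩), map_one]
  | one => exact ⟨1, one_mul 1⟩
  | mul x y hx hy ihx ihy =>
    obtain ⟨vx, hvx⟩ := ihx
    obtain ⟨vy, hvy⟩ := ihy
    refine ⟨vy * vx, ?_⟩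
    rw [mul_assoc, ← mul_assoc y, hvy, one_mul, hvx]

lemma Rs_left_inv {u : AdjInv T} (hu : u ∈ Rs T) : ∃ v, v * u = 1 := by
  induction hu using Submonoid.closure_induction with
  | mem x hx =>
    rcases hx with ⟨w, rfl⟩ | ⟨w, hw, p, q, hq, rfl, rfl⟩
    · refine ⟨natHom T w.1, ?_⟩
      rw [invElt, natHom]
      show (invCon T).mk' (emb T w.1) * (invCon T).mk' (igen T w) = 1
      rw [← map_mul, mk'_rel (InvRel.mul_inv w), map_one]
    · refine ⟨invElt T ⟨p * q, hw⟩ * natHom T p, ?_⟩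
      rw [natHom, invElt]
      show (invCon T).mk' (igen T ⟨p * q, hw⟩) * (invCon T).mk' (emb T p) *
        (invCon T).mk' (emb T q) = 1
      rw [mul_assoc, ← map_mul, ← map_mul]
      have hemb : emb T p * emb T q = emb T (⟨p * q, hw⟩ : T).1 := by rw [← map_mul]
      rw [hemb, mk'_rel (InvRel.inv_mul ⟨p * q, hw⟩), map_one]
  | one => exact ⟨1, one_mul 1⟩
  | mul x y hx hy ihx ihy =>
    obtain ⟨vx, hvx⟩ := ihx
    obtain ⟨vy, hvy⟩ := ihy
    refine ⟨vy * vx, ?_⟩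
    rw [mul_assoc, ← mul_assoc vx, hvx, one_mul, hvy]

end Stmt5Aux

/-- an element of `⟨X : i(T)⟩` is right invertible iff it lies in the
submonoid generated by the `i(w)` and the images of nonempty prefixes of elements of
`T`; dually for left invertibility with suffixes. -/
theorem stmt5 (X : Type*) (T : Set (FreeMonoid X))
    (h1 : (1 : FreeMonoid X) ∉ T) (hT : OverlapFree T) (u : AdjInv T) :
    ((∃ v, u * v = 1) ↔ u ∈ Submonoid.closure
      (Set.range (invElt T) ∪
        {x | ∃ w ∈ T, ∃ p q : FreeMonoid X, p ≠ 1 ∧ w = p * q ∧ x = natHom T p})) ∧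
    ((∃ v, v * u = 1) ↔ u ∈ Submonoid.closure
      (Set.range (invElt T) ∪
        {x | ∃ w ∈ T, ∃ p q : FreeMonoid X, q ≠ 1 ∧ w = p * q ∧ x = natHom T q})) := by
  constructor
  · constructor
    · rintro ⟨v, hv⟩
      exact (key h1 hT hv).1
    · intro hu
      exact Rp_right_inv hu
  · constructor
    · rintro ⟨v, hv⟩
      exact (key h1 hT hv).2
    · intro hu
      exact Rs_left_inv hu

end AdjoinInverses
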